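/- Let p(z,w) = z^m − w^n with m, n ≥ 1 and J = 𝕋. Then p is expansive on 𝕋 if and only if m does not divide n. Here expansive means: for every nonempty relatively open set U ⊂ 𝕋 there exists a natural number r such that U^{(r)} = 𝕋, where U^{(r)} = {w ∈ 𝕋 : ∃ z₁ ∈ U, z₂,…,z_r ∈ 𝕋 with z_k^m = z_{k+1}^n for k=1,…,r−1 and z_r^m = w^n}. -/

import Mathlib

open Complex Real

noncomputable def eT (x : ℝ) : ℂ := Complex.exp ((2 * π * x : ℝ) * Complex.I)

lemma abs_eT (x : ℝ) : ‖eT x‖ = 1 := Complex.norm_exp_ofReal_mul_I _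

lemma eT_pow (x : ℝ) (k : ℕ) : (eT x) ^ k = eT (k * x) := by
  rw [eT, eT, ← Complex.exp_nat_mul]
  congr 1
  push_cast
  ring

lemma eT_eq_of_int (x y : ℝ) (c : ℤ) (h : x = y + c) : eT x = eT y := by
  subst h
  rw [eT, eT]
  push_cast
  rw [show ((2:ℂ) * ↑π * (↑y + ↑c)) * I = (2*↑π*↑y)*I + ↑c * (2*↑π*I) by ring, Complex.exp_add,
    Complex.exp_int_mul_two_pi_mul_I, mul_one]

lemma eT_half : eT (1/2) = -1 := by
  rw [eT, show (2 * π * (1/2) : ℝ) = π by ring]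
  exact Complex.exp_pi_mul_I

lemma continuous_eT : Continuous eT := by
  unfold eT
  fun_prop

lemma gcd_pow_eq (m n s : ℕ) (hm : 1 ≤ m) :
    Nat.gcd (m ^ s) (n ^ s) = Nat.gcd m n ^ s := by
  set g := Nat.gcd m n with hgdef
  have hg : 0 < g := Nat.gcd_pos_of_pos_left _ hm
  obtain ⟨a, ha⟩ : g ∣ m := Nat.gcd_dvd_left m n
  obtain ⟨b, hb⟩ : g ∣ n := Nat.gcd_dvd_right m n
  have hab : Nat.Coprime a b := by
    have h := Nat.coprime_div_gcd_div_gcd hg (m := m) (n := n)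
    rw [← hgdef] at h
    rwa [ha, hb, Nat.mul_div_cancel_left _ hg, Nat.mul_div_cancel_left _ hg] at h
  have h2 : Nat.gcd (a ^ s) (b ^ s) = 1 := Nat.Coprime.pow s s hab
  rw [ha, hb, mul_pow, mul_pow, Nat.gcd_mul_left, h2, mul_one]

lemma div_path (m q : ℕ) : ∀ r : ℕ, ∀ z : Fin (r + 2) → ℂ,
    (∀ k : Fin (r + 1), z k.castSucc ^ m = z k.succ ^ (m * q)) →
    z (Fin.last (r + 1)) ^ (m * q * q ^ r) = z 0 ^ m := by
  intro r
  induction r with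
  | zero =>
    intro z h
    have h0 := h 0
    rw [Fin.castSucc_zero] at h0
    rw [pow_zero, mul_one, show Fin.last 1 = Fin.succ 0 from rfl, ← h0]
  | succ s ih =>
    intro z h
    have h' : ∀ k : Fin (s + 1), (z ∘ Fin.castSucc) k.castSucc ^ m
        = (z ∘ Fin.castSucc) k.succ ^ (m * q) := by
      intro k
      have hk := h k.castSucc
      show z k.castSucc.castSucc ^ m = z k.succ.castSucc ^ (m * q)
      rw [← Fin.succ_castSucc]; exact hk
    have key := ih (z ∘ Fin.castSucc) h'
    simp only [Function.comp, Fin.castSucc_zero] at key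
    have hlast := h (Fin.last (s + 1))
    have e1 : (Fin.last (s + 1)).succ = Fin.last (s + 2) := rfl
    rw [e1] at hlast
    calc z (Fin.last (s + 2)) ^ (m * q * q ^ (s + 1))
        = (z (Fin.last (s + 2)) ^ (m * q)) ^ q ^ (s + 1) := by rw [← pow_mul]
      _ = (z (Fin.last (s + 1)).castSucc ^ m) ^ q ^ (s + 1) := by rw [hlast]
      _ = z (Fin.last (s + 1)).castSucc ^ (m * q * q ^ s) := by
            rw [← pow_mul]; ring_nf
      _ = z 0 ^ m := key

lemma reach (m n : ℕ) (hm : 1 ≤ m) (hn : 1 ≤ n) (s : ℕ) (x y : ℝ) (c d : ℤ)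
    (hxy : (m:ℝ) ^ (s+1) * x = (n:ℝ) ^ (s+1) * y - ((c:ℝ) * (m:ℝ) ^ s + (d:ℝ) * (n:ℝ) ^ s)) :
    ∃ z : Fin (s + 2) → ℂ, (∀ k, ‖z k‖ = 1) ∧
      (∀ k : Fin (s + 1), z k.castSucc ^ m = z k.succ ^ n) ∧
      z 0 = eT x ∧ z (Fin.last (s + 1)) = eT y := by
  have hm0 : (m:ℝ) ≠ 0 := Nat.cast_ne_zero.mpr (by omega)
  have hn0 : (n:ℝ) ≠ 0 := Nat.cast_ne_zero.mpr (by omega)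
  classical
  set xf : ℕ → ℝ := fun k => if k = 0 then x else if k = s + 1 then y
      else ((m:ℝ) ^ k * x + (c:ℝ) * (m:ℝ) ^ (k - 1)) / (n:ℝ) ^ k with hxf
  have hxf0 : xf 0 = x := by simp [hxf]
  have hxftop : xf (s + 1) = y := by simp [hxf]
  have hxfmid : ∀ j, j ≠ 0 → j ≠ s + 1 →
      xf j = ((m:ℝ) ^ j * x + (c:ℝ) * (m:ℝ) ^ (j - 1)) / (n:ℝ) ^ j := by
    intro j h1 h2; simp [hxf, h1, h2]
  refine ⟨fun k => eT (xf k.val), fun k => abs_eT _, ?_, by simp [hxf0], by simp [hxftop]⟩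
  intro k
  show eT (xf k.castSucc.val) ^ m = eT (xf k.succ.val) ^ n
  rw [eT_pow, eT_pow, Fin.coe_castSucc, Fin.val_succ]
  have hjlt : (k : ℕ) < s + 1 := k.isLt
  rcases Nat.eq_zero_or_pos (k : ℕ) with h0 | hpos
  · rw [h0, hxf0]
    rcases Nat.eq_zero_or_pos s with rfl | hspos
    · rw [zero_add, hxftop]
      refine eT_eq_of_int _ _ (-(c + d)) ?_
      push_cast
      linear_combination hxy
    · rw [zero_add, hxfmid 1 one_ne_zero (by omega)]
      refine eT_eq_of_int _ _ (-c) ?_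
      push_cast
      field_simp
      ring
  · obtain ⟨i, hk⟩ : ∃ i, (k : ℕ) = i + 1 := ⟨(k : ℕ) - 1, by omega⟩
    rw [hk]
    rcases Nat.lt_or_ge (i + 1) s with hlt | hge
    · rw [hxfmid (i + 1) (by omega) (by omega), hxfmid (i + 1 + 1) (by omega) (by omega)]
      simp only [Nat.add_sub_cancel]
      refine eT_eq_of_int _ _ 0 ?_
      push_cast
      field_simp
      ring
    · have hs : s = i + 1 := by omega
      have hge2 := hk ▸ hjlt
      rw [hs] at hxy
      rw [hxfmid (i + 1) (by omega) (by omega), show i + 1 + 1 = s + 1 from by omega, hxftop]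
      simp only [Nat.add_sub_cancel]
      refine eT_eq_of_int _ _ (-d) ?_
      push_cast
      field_simp
      linear_combination hxy

lemma eT_arg (w : ℂ) (hw : ‖w‖ = 1) : eT (w.arg / (2 * π)) = w := by
  have hπ : (2 * π : ℝ) ≠ 0 := by positivity
  rw [eT, show (2 * π * (w.arg / (2 * π)) : ℝ) = w.arg by field_simp]
  have h := Complex.norm_mul_exp_arg_mul_I w
  rwa [hw, Complex.ofReal_one, one_mul] at h

/-- `U^{(r)}`: endpoints of length-`r` paths of the correspondence `z^m = w^n`
on the unit circle starting in `U`. -/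
def pathEndT (m n r : ℕ) (U : Set ℂ) : Set ℂ :=
  {w | ∃ z : Fin (r + 1) → ℂ, (∀ k, ‖z k‖ = 1) ∧
    (∀ k : Fin r, z k.castSucc ^ m = z k.succ ^ n) ∧ z 0 ∈ U ∧ z (Fin.last r) = w}

/-- `p(z,w) = z^m - w^n` is expansive on `𝕋` (every nonempty
relatively open `U ⊆ 𝕋` has `U^{(r)} = 𝕋` for some `r`) iff `m` does not
divide `n`. -/
theorem stmt_6 (m n : ℕ) (hm : 1 ≤ m) (hn : 1 ≤ n) :
    (∀ U : Set ℂ, U ⊆ {z : ℂ | ‖z‖ = 1} → U.Nonempty →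
        (∃ V : Set ℂ, IsOpen V ∧ U = V ∩ {z : ℂ | ‖z‖ = 1}) →
        ∃ r : ℕ, pathEndT m n r U = {z : ℂ | ‖z‖ = 1}) ↔ ¬ m ∣ n := by
  constructor
  · -- expansive → ¬ m ∣ n
    intro hexp hdvd
    obtain ⟨q, hq⟩ := hdvd
    have hq1 : 1 ≤ q := by
      rcases Nat.eq_zero_or_pos q with rfl | h
      · omega
      · exact h
    have hVopen : IsOpen {z : ℂ | z ^ m ≠ -1} := by
      have he : {z : ℂ | z ^ m ≠ -1} = (fun z : ℂ => z ^ m) ⁻¹' {(-1 : ℂ)}ᶜ := rfl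
      rw [he]; exact (isOpen_compl_singleton).preimage (continuous_pow m)
    have hne : ({z : ℂ | z ^ m ≠ -1} ∩ {z : ℂ | ‖z‖ = 1}).Nonempty := by
      refine ⟨1, ?_, ?_⟩
      · simp only [Set.mem_setOf_eq, one_pow]
        norm_num
      · simp
    obtain ⟨r, hr⟩ := hexp ({z : ℂ | z ^ m ≠ -1} ∩ {z : ℂ | ‖z‖ = 1})
      Set.inter_subset_right hne ⟨_, hVopen, rfl⟩
    have hm0 : (m : ℝ) ≠ 0 := Nat.cast_ne_zero.mpr (by omega)
    have hq0 : (q : ℝ) ≠ 0 := Nat.cast_ne_zero.mpr (by omega)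
    rcases r with _ | s
    · have hw : eT (1 / (2 * m)) ∈ {z : ℂ | ‖z‖ = 1} := abs_eT _
      rw [← hr] at hw
      obtain ⟨z, -, -, hz0, hzl⟩ := hw
      have hzz : z (Fin.last 0) = z 0 := rfl
      rw [hzz] at hzl
      have h1 : (eT (1 / (2 * m))) ^ m ≠ -1 := hzl ▸ hz0.1
      apply h1
      rw [eT_pow, show ((m : ℝ)) * (1 / (2 * m)) = 1 / 2 by field_simp, eT_half]
    · have hw : eT (1 / (2 * ((m : ℝ) * q * q ^ s))) ∈ {z : ℂ | ‖z‖ = 1} := abs_eT _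
      rw [← hr] at hw
      obtain ⟨z, -, hrel, hz0, hzl⟩ := hw
      have hrel' : ∀ k : Fin (s + 1), z k.castSucc ^ m = z k.succ ^ (m * q) := by
        intro k
        rw [← hq]
        exact hrel k
      have key := div_path m q s z hrel'
      rw [hzl] at key
      apply hz0.1
      rw [← key, eT_pow, show ((m * q * q ^ s : ℕ) : ℝ) * (1 / (2 * ((m : ℝ) * q * q ^ s)))
        = 1 / 2 by push_cast; field_simp, eT_half]
  · -- ¬ m ∣ n → expansive
    intro hndvd U hUsub hUne hUrel
    obtain ⟨z0, hz0U⟩ := hUne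
    obtain ⟨V, hVopen, hUV⟩ := hUrel
    have hz0T : ‖z0‖ = 1 := hUsub hz0U
    set x0 : ℝ := z0.arg / (2 * π) with hx0
    have he0 : eT x0 = z0 := eT_arg z0 hz0T
    have hz0V : z0 ∈ V := by rw [hUV] at hz0U; exact hz0U.1
    obtain ⟨ε, hε, hball⟩ := Metric.isOpen_iff.mp hVopen z0 hz0V
    obtain ⟨δ, hδ, hδball⟩ := Metric.continuousAt_iff.mp continuous_eT.continuousAt ε hε
    have hU' : ∀ x : ℝ, |x - x0| < δ → eT x ∈ U := by
      intro x hx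
      have h1 : dist (eT x) z0 < ε := by
        rw [← he0]
        exact hδball (by rwa [Real.dist_eq])
      rw [hUV]
      exact ⟨hball h1, abs_eT x⟩
    -- number theory setup
    set g := Nat.gcd m n with hgdef
    have hgpos : 0 < g := Nat.gcd_pos_of_pos_left _ hm
    have hglt : 2 * g ≤ m := by
      obtain ⟨a, ha⟩ : g ∣ m := Nat.gcd_dvd_left m n
      have ha2 : 2 ≤ a := by
        rcases a with _ | _ | a
        · omega
        · exfalso
          apply hndvd
          have hmg : m = g := by omega
          rw [hmg]
          exact Nat.gcd_dvd_right m n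
        · omega
      have := Nat.mul_le_mul_left g ha2
      omega
    obtain ⟨s, hsmall⟩ := exists_pow_lt_of_lt_one hδ (by norm_num : (1 : ℝ) / 2 < 1)
    have hm0 : (m : ℝ) ≠ 0 := Nat.cast_ne_zero.mpr (by omega)
    have hn0 : (n : ℝ) ≠ 0 := Nat.cast_ne_zero.mpr (by omega)
    set sp : ℝ := (g : ℝ) ^ s / (m : ℝ) ^ (s + 1) with hspdef
    have hsp_pos : 0 < sp := by rw [hspdef]; positivity
    have hsp_lt : sp < δ := by
      have h2g : (2 * g : ℝ) ≤ m := by exact_mod_cast hglt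
      have h3 : (g : ℝ) ^ s ≤ ((1 : ℝ) / 2 * m) ^ s := by
        apply pow_le_pow_left₀ (by positivity)
        linarith
      have h4 : ((1 : ℝ) / 2 * m) ^ s = (1 / 2) ^ s * (m : ℝ) ^ s := mul_pow _ _ _
      have hms : (0 : ℝ) < (m : ℝ) ^ (s + 1) := by positivity
      rw [hspdef, div_lt_iff₀ hms]
      have hm1 : (1 : ℝ) ≤ (m : ℝ) := by exact_mod_cast hm
      have h5 : (1 / 2 : ℝ) ^ s * (m : ℝ) ^ s < δ * (m : ℝ) ^ s := by
        apply mul_lt_mul_of_pos_right hsmall (by positivity)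
      have h6 : δ * (m : ℝ) ^ s ≤ δ * (m : ℝ) ^ (s + 1) := by
        apply mul_le_mul_of_nonneg_left _ (le_of_lt hδ)
        calc (m : ℝ) ^ s = (m : ℝ) ^ s * 1 := by ring
          _ ≤ (m : ℝ) ^ s * (m : ℝ) := by
              apply mul_le_mul_of_nonneg_left hm1 (by positivity)
          _ = (m : ℝ) ^ (s + 1) := by ring
      calc (g : ℝ) ^ s ≤ (1 / 2) ^ s * (m : ℝ) ^ s := by rw [← h4]; exact h3
        _ < δ * (m : ℝ) ^ s := h5
        _ ≤ δ * (m : ℝ) ^ (s + 1) := h6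
    refine ⟨s + 1, Set.Subset.antisymm ?_ ?_⟩
    · rintro w ⟨z, habs, -, -, rfl⟩
      exact habs _
    · intro w hw
      set y : ℝ := w.arg / (2 * π) with hydef
      have hey : eT y = w := eT_arg w hw
      set C : ℝ := (n : ℝ) ^ (s + 1) * y / (m : ℝ) ^ (s + 1) with hCdef
      set t : ℤ := round ((C - x0) / sp) with htdef
      set x : ℝ := C - t * sp with hxdef
      have hxx0 : |x - x0| < δ := by
        have h1 : |(C - x0) / sp - t| ≤ 1 / 2 := abs_sub_round _
        have h2 : x - x0 = ((C - x0) / sp - t) * sp := by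
          rw [sub_mul, div_mul_cancel₀ _ (ne_of_gt hsp_pos), hxdef]
          ring
        rw [h2, abs_mul, abs_of_pos hsp_pos]
        have h3 : |(C - x0) / sp - ↑t| * sp ≤ (1 / 2) * sp :=
          mul_le_mul_of_nonneg_right h1 hsp_pos.le
        have : (1 / 2 : ℝ) * sp < δ := by linarith
        linarith
      -- Bezout
      set α : ℤ := Int.gcdA ((m : ℤ) ^ s) ((n : ℤ) ^ s) with hα
      set β : ℤ := Int.gcdB ((m : ℤ) ^ s) ((n : ℤ) ^ s) with hβ
      have hbez : ((g : ℤ)) ^ s = (m : ℤ) ^ s * α + (n : ℤ) ^ s * β := by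
        have h0 := Int.gcd_eq_gcd_ab ((m : ℤ) ^ s) ((n : ℤ) ^ s)
        have h1 : Int.gcd ((m : ℤ) ^ s) ((n : ℤ) ^ s) = g ^ s := by
          rw [show ((m : ℤ) ^ s) = ((m ^ s : ℕ) : ℤ) by push_cast; ring,
            show ((n : ℤ) ^ s) = ((n ^ s : ℕ) : ℤ) by push_cast; ring,
            Int.gcd_natCast_natCast, gcd_pow_eq m n s hm]
        rw [h1] at h0
        rw [← h0]
        push_cast
        ring
      have hbezR : ((g : ℝ)) ^ s = (m : ℝ) ^ s * (α : ℝ) + (n : ℝ) ^ s * (β : ℝ) := by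
        exact_mod_cast hbez
      have hxy : (m : ℝ) ^ (s + 1) * x = (n : ℝ) ^ (s + 1) * y
          - (((t * α : ℤ) : ℝ) * (m : ℝ) ^ s + ((t * β : ℤ) : ℝ) * (n : ℝ) ^ s) := by
        rw [hxdef, hCdef, hspdef]
        push_cast
        field_simp
        linear_combination (-(t : ℝ)) * hbezR
      obtain ⟨z, h1, h2, h3, h4⟩ := reach m n hm hn s x y (t * α) (t * β) hxy
      exact ⟨z, h1, h2, by rw [h3]; exact hU' x hxx0, by rw [h4, hey]⟩
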